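/- Let G = SN(n,𝒜) be a SetNim game and suppose C ⊆ {1,...,n} satisfies: for every A ∈ 𝒜, either C ⊆ A or C ∩ A = ∅. Define the merge-reduced game G̃ on vertex set ({1,...,n} − C) ∪ {v*} with move sets Ã = A if A ∩ C = ∅ and Ã = (A − C) ∪ {v*} otherwise; for a position p of G define p̃ by p̃_{v*} = Σ_{i∈C} p_i and p̃_i = p_i for i ∉ C. Then the Sprague–Grundy values satisfy g(p) = g(p̃). In particular, p is a P-position of G if and only if p̃ is a P-position of G̃. -/

import Mathlib

/-- A legal move in SetNim: at least one stack strictly decreases, all changed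
stacks lie in some allowed move set, stacks weakly decrease. -/
def Move {V : Type} (A : Set (Set V)) (p q : V → ℕ) : Prop :=
  q ≠ p ∧ (∀ i, q i ≤ p i) ∧ ∃ a ∈ A, ∀ i, q i ≠ p i → i ∈ a

/-- P-positions: positions all of whose options are N-positions. -/
def PPos {V : Type} [Fintype V] (A : Set (Set V)) (p : V → ℕ) : Prop :=
  ∀ q, Move A p q → ¬ PPos A q
termination_by Finset.univ.sum p
decreasing_by
  rename_i hq
  obtain ⟨hne, hle, -⟩ := hq
  refine Finset.sum_lt_sum (fun i _ => hle i) ?_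
  obtain ⟨i, hi⟩ := Function.ne_iff.mp hne
  exact ⟨i, Finset.mem_univ i, lt_of_le_of_ne (hle i) hi⟩

/-- The Sprague–Grundy value: the mex of the Grundy values of the options. -/
noncomputable def grundy {V : Type} [Fintype V] (A : Set (Set V)) (p : V → ℕ) : ℕ :=
  sInf {m : ℕ | ∀ q, Move A p q → grundy A q ≠ m}
termination_by Finset.univ.sum p
decreasing_by
  rename_i hq
  obtain ⟨hne, hle, -⟩ := hq
  refine Finset.sum_lt_sum (fun i _ => hle i) ?_
  obtain ⟨i, hi⟩ := Function.ne_iff.mp hne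
  exact ⟨i, Finset.mem_univ i, lt_of_le_of_ne (hle i) hi⟩

/-- The vertex set of the merge-reduced game: vertices outside C, plus the new
merged vertex v* (the Sum.inr vertex). -/
abbrev MVert (n : ℕ) (C : Finset (Fin n)) : Type := {i : Fin n // i ∉ C} ⊕ Unit

/-- The merge-reduced move set: Ã = A if A ∩ C = ∅, and Ã = (A − C) ∪ {v*}
otherwise. -/
def mergeSet {n : ℕ} (C : Finset (Fin n)) (a : Set (Fin n)) : Set (MVert n C) :=
  {w | Sum.elim (fun i => i.1 ∈ a) (fun _ => ((↑C : Set (Fin n)) ∩ a).Nonempty) w}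

/-- The collection of merged move sets. -/
def mergeSets {n : ℕ} (C : Finset (Fin n)) (A : Set (Set (Fin n))) :
    Set (Set (MVert n C)) := mergeSet C '' A

/-- The merged position: p̃ᵥ* = Σ_{i ∈ C} pᵢ and p̃ᵢ = pᵢ for i ∉ C. -/
def mergePos {n : ℕ} (C : Finset (Fin n)) (p : Fin n → ℕ) : MVert n C → ℕ :=
  Sum.elim (fun i => p i.1) (fun _ => ∑ i ∈ C, p i)


lemma move_sum_lt {V : Type} [Fintype V] {A : Set (Set V)} {p q : V → ℕ}
    (hq : Move A p q) : Finset.univ.sum q < Finset.univ.sum p := by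
  obtain ⟨hne, hle, -⟩ := hq
  refine Finset.sum_lt_sum (fun i _ => hle i) ?_
  obtain ⟨i, hi⟩ := Function.ne_iff.mp hne
  exact ⟨i, Finset.mem_univ i, lt_of_le_of_ne (hle i) hi⟩

lemma sum_mergePos {n : ℕ} (C : Finset (Fin n)) (p : Fin n → ℕ) :
    Finset.univ.sum (mergePos C p) = Finset.univ.sum p := by
  rw [Fintype.sum_sum_type]
  simp only [mergePos, Sum.elim_inl, Sum.elim_inr, Finset.sum_const, Finset.card_univ]
  simp
  rw [← Finset.sum_subtype (s := Cᶜ) (p := fun i => i ∉ C) (by simp) (f := p)]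
  exact Finset.sum_compl_add_sum C p

lemma distribute {n : ℕ} (C : Finset (Fin n)) (p : Fin n → ℕ) (m : ℕ)
    (hm : m ≤ ∑ i ∈ C, p i) :
    ∃ q : Fin n → ℕ, (∀ i, q i ≤ p i) ∧ (∀ i ∉ C, q i = p i) ∧ ∑ i ∈ C, q i = m := by
  induction C using Finset.induction generalizing m with
  | empty => simp only [Finset.sum_empty, Nat.le_zero] at hm
             exact ⟨p, fun _ => le_rfl, fun _ _ => rfl, by simp [hm]⟩
  | insert _ _ hi =>
    rename_i i s ih
    rw [Finset.sum_insert hi] at hm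
    obtain ⟨q₀, h1, h2, h3⟩ := ih (m - min m (p i)) (by omega)
    refine ⟨Function.update q₀ i (min m (p i)), ?_, ?_, ?_⟩
    · intro j
      rcases eq_or_ne j i with rfl | h
      · simp only [Function.update_self]; omega
      · simpa [Function.update_of_ne h] using h1 j
    · intro j hj
      simp only [Finset.mem_insert, not_or] at hj
      rw [Function.update_of_ne hj.1]; exact h2 j hj.2
    · rw [Finset.sum_insert hi, Function.update_self]
      have : ∑ x ∈ s, Function.update q₀ i (m ⊓ p i) x = ∑ x ∈ s, q₀ x :=
        Finset.sum_congr rfl (fun j hj => Function.update_of_ne (by rintro rfl; exact hi hj) _ _)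
      rw [this, h3]; omega

lemma move_merge {n : ℕ} {A : Set (Set (Fin n))} {C : Finset (Fin n)} {p q : Fin n → ℕ}
    (hq : Move A p q) : Move (mergeSets C A) (mergePos C p) (mergePos C q) := by
  obtain ⟨hne, hle, a, ha, hchg⟩ := hq
  have hsum : ∑ i ∈ C, q i ≤ ∑ i ∈ C, p i := Finset.sum_le_sum (fun i _ => hle i)
  refine ⟨?_, ?_, mergeSet C a, ⟨a, ha, rfl⟩, ?_⟩
  · intro h
    apply hne
    funext i
    by_cases hi : i ∈ C
    · by_contra hne'
      have h1 : ∑ i ∈ C, q i < ∑ i ∈ C, p i :=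
        Finset.sum_lt_sum (fun j _ => hle j) ⟨i, hi, lt_of_le_of_ne (hle i) hne'⟩
      have := congrFun h (Sum.inr ())
      simp only [mergePos, Sum.elim_inr] at this
      omega
    · have := congrFun h (Sum.inl ⟨i, hi⟩)
      simpa [mergePos] using this
  · rintro (⟨i, hi⟩ | u)
    · exact hle i
    · exact hsum
  · rintro (⟨i, hi⟩ | u) hne'
    · exact hchg i (by simpa [mergePos] using hne')
    · simp only [mergePos, Sum.elim_inr, ne_eq] at hne'
      have h1 : ∑ i ∈ C, q i < ∑ i ∈ C, p i := lt_of_le_of_ne hsum hne'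
      obtain ⟨i, hi, hlt⟩ : ∃ i ∈ C, q i < p i := by
        by_contra hcon
        push_neg at hcon
        exact absurd (Finset.sum_le_sum fun i hi => hcon i hi) (not_le.mpr h1)
      exact ⟨i, hi, hchg i (Nat.ne_of_lt hlt)⟩

lemma move_lift {n : ℕ} {A : Set (Set (Fin n))} {C : Finset (Fin n)}
    (hC : ∀ a ∈ A, (↑C : Set (Fin n)) ⊆ a ∨ (↑C : Set (Fin n)) ∩ a = ∅)
    {p : Fin n → ℕ} {q' : MVert n C → ℕ}
    (hq' : Move (mergeSets C A) (mergePos C p) q') :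
    ∃ q : Fin n → ℕ, Move A p q ∧ mergePos C q = q' := by
  obtain ⟨hne, hle, b, ⟨a, ha, rfl⟩, hchg⟩ := hq'
  by_cases hstar : q' (Sum.inr ()) = ∑ i ∈ C, p i
  · -- merged vertex unchanged
    refine ⟨fun i => if h : i ∈ C then p i else q' (Sum.inl ⟨i, h⟩), ⟨?_, ?_, a, ha, ?_⟩, ?_⟩
    · intro h
      apply hne
      funext w
      rcases w with ⟨i, hi⟩ | u
      · have := congrFun h i
        simp only [hi, dif_neg] at this
        simpa [mergePos] using this
      · simpa [mergePos] using hstar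
    · intro i
      by_cases h : i ∈ C
      · simp [h]
      · simpa [h, mergePos] using hle (Sum.inl ⟨i, h⟩)
    · intro i hi
      by_cases h : i ∈ C
      · simp [h] at hi
      · simp only [h, dif_neg] at hi
        have := hchg (Sum.inl ⟨i, h⟩) (by simpa [mergePos] using hi)
        simpa [mergeSet] using this
    · funext w
      rcases w with ⟨i, hi⟩ | u
      · simp [mergePos, hi]
      · simp only [mergePos, Sum.elim_inr]
        have hs : ∑ i ∈ C, (if h : i ∈ C then p i else q' (Sum.inl ⟨i, h⟩)) = ∑ i ∈ C, p i :=
          Finset.sum_congr rfl fun i hi => dif_pos hi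
        exact hs.trans hstar.symm
  · -- merged vertex changed: then C ⊆ a
    have hlt : q' (Sum.inr ()) < ∑ i ∈ C, p i :=
      lt_of_le_of_ne (by simpa [mergePos] using hle (Sum.inr ())) hstar
    have hCa : (↑C : Set (Fin n)) ⊆ a := by
      have hmem := hchg (Sum.inr ()) (by simpa [mergePos] using hstar)
      simp only [mergeSet, Set.mem_setOf_eq, Sum.elim_inr] at hmem
      rcases hC a ha with h | h
      · exact h
      · rw [h] at hmem; exact absurd hmem Set.not_nonempty_empty
    obtain ⟨q₀, h1, h2, h3⟩ := distribute C p (q' (Sum.inr ())) hlt.le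
    refine ⟨fun i => if h : i ∈ C then q₀ i else q' (Sum.inl ⟨i, h⟩), ⟨?_, ?_, a, ha, ?_⟩, ?_⟩
    · intro h
      obtain ⟨i, hi, hilt⟩ : ∃ i ∈ C, q₀ i < p i := by
        by_contra hcon
        push_neg at hcon
        have := Finset.sum_le_sum (fun i hi => hcon i hi)
        omega
      have := congrFun h i
      simp only [hi, dif_pos] at this
      omega
    · intro i
      by_cases h : i ∈ C
      · simpa [h] using h1 i
      · simpa [h, mergePos] using hle (Sum.inl ⟨i, h⟩)
    · intro i hi
      by_cases h : i ∈ C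
      · exact hCa h
      · simp only [h, dif_neg] at hi
        have := hchg (Sum.inl ⟨i, h⟩) (by simpa [mergePos] using hi)
        simpa [mergeSet] using this
    · funext w
      rcases w with ⟨i, hi⟩ | u
      · simp [mergePos, hi]
      · simp only [mergePos, Sum.elim_inr]
        have hs : ∑ i ∈ C, (if h : i ∈ C then q₀ i else q' (Sum.inl ⟨i, h⟩)) = ∑ i ∈ C, q₀ i :=
          Finset.sum_congr rfl fun i hi => dif_pos hi
        exact hs.trans h3

lemma merge_reduction_aux {n : ℕ} (A : Set (Set (Fin n))) (C : Finset (Fin n))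
    (hC : ∀ a ∈ A, (↑C : Set (Fin n)) ⊆ a ∨ (↑C : Set (Fin n)) ∩ a = ∅) :
    ∀ N (p : Fin n → ℕ), Finset.univ.sum p < N →
    grundy A p = grundy (mergeSets C A) (mergePos C p) ∧
      (PPos A p ↔ PPos (mergeSets C A) (mergePos C p)) := by
  intro N
  induction N with
  | zero => intro p hp; omega
  | succ N ih =>
    intro p hp
    have key : ∀ q : Fin n → ℕ, Move A p q →
        grundy A q = grundy (mergeSets C A) (mergePos C q) ∧
          (PPos A q ↔ PPos (mergeSets C A) (mergePos C q)) := by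
      intro q hq
      exact ih q (by have := move_sum_lt hq; omega)
    constructor
    · rw [grundy, grundy]
      congr 1
      ext m
      simp only [Set.mem_setOf_eq]
      constructor
      · intro h q' hq'
        obtain ⟨q, hq, rfl⟩ := move_lift hC hq'
        rw [← (key q hq).1]
        exact h q hq
      · intro h q hq
        rw [(key q hq).1]
        exact h _ (move_merge hq)
    · rw [PPos, PPos]
      constructor
      · intro h q' hq'
        obtain ⟨q, hq, rfl⟩ := move_lift hC hq'
        exact fun hP => h q hq ((key q hq).2.mpr hP)
      · intro h q hq
        exact fun hP => h _ (move_merge hq) ((key q hq).2.mp hP)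

/-- if every move set either contains C or is disjoint from C, the
merge-reduced game has the same Grundy values; in particular p is a P-position
iff its merge reduction is. -/
theorem merge_reduction {n : ℕ} (A : Set (Set (Fin n))) (C : Finset (Fin n))
    (hC : ∀ a ∈ A, (↑C : Set (Fin n)) ⊆ a ∨ (↑C : Set (Fin n)) ∩ a = ∅)
    (p : Fin n → ℕ) :
    grundy A p = grundy (mergeSets C A) (mergePos C p) ∧
      (PPos A p ↔ PPos (mergeSets C A) (mergePos C p)) := by
  exact merge_reduction_aux A C hC (Finset.univ.sum p + 1) p (by omega)
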